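/- Let t ≥ 4 be even and let D be a symmetric cycle in the hypercube graph on {1,−1}^t, with subtopes S^0, S^1, …, S^{2t−1} defined by S^k = (1/2)(D^k + D^{k+1}) (indices mod 2t). For every vertex T ∈ {1,−1}^t there exist a subset Q̄ ⊂ {S^0,…,S^{2t−1}} of cardinality exactly t and positive odd integers λ_Q (Q ∈ Q̄), with 1 ≤ λ_Q ≤ t−1, such that T = Σ_{Q ∈ Q̄} λ_Q · Q; moreover Q̄ contains exactly one element of each antipodal pair {S^k, −S^k = S^{k+t}}, and the pair (Q̄, (λ_Q)) with these properties is unique. -/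

import Mathlib

def s8 (m : ℕ) : ℤ := if Even m then 0 else 1
def w8 (k j : ℕ) : ℤ := if j = k then 0 else if j < k then (-1)^(j+k) else (-1)^(j+k+1)
def sig8 (e k : ℕ) : ℤ := if k < e then 1 else if k = e then 0 else -1

lemma s8_succ (m : ℕ) : s8 (m+1) = 1 - s8 m := by
  rcases Nat.even_or_odd m with h | h
  · simp [s8, Nat.even_add_one, h]
  · simp [s8, Nat.even_add_one, Nat.not_even_iff_odd.mpr h]

lemma negpow (m : ℕ) : (-1 : ℤ)^m = 1 - 2 * s8 m := by
  rcases Nat.even_or_odd m with h | h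
  · simp [s8, h, h.neg_one_pow]
  · simp [s8, Nat.not_even_iff_odd.mpr h, h.neg_one_pow]

lemma P8 (j m : ℕ) : ∑ k ∈ Finset.range m, w8 k j =
    if m ≤ j then (-1)^(j+1) * s8 m
    else (-1)^(j+1) * s8 j + (-1)^j * (s8 m - s8 (j+1)) := by
  induction m with
  | zero => simp [s8]
  | succ m ih =>
    rw [Finset.sum_range_succ, ih]
    rcases lt_trichotomy m j with h | h | h
    · have h1 : m ≤ j := le_of_lt h
      have h2 : m + 1 ≤ j := h
      have hw : w8 m j = (-1)^(j+m+1) := by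
        simp [w8, Nat.ne_of_gt h, not_lt.mpr (le_of_lt h)]
      rw [if_pos h1, if_pos h2, hw]
      simp only [s8_succ, pow_add, pow_one]
      rw [negpow m]; ring
    · subst h
      rw [if_pos le_rfl, if_neg (by omega)]
      simp [w8, s8_succ]
    · have h1 : ¬ m ≤ j := not_le.mpr h
      have h2 : ¬ m + 1 ≤ j := by omega
      have hw : w8 m j = (-1)^(j+m) := by
        simp [w8, Nat.ne_of_lt h, h]
      rw [if_neg h1, if_neg h2, hw]
      simp only [s8_succ, pow_add, pow_one]
      rw [negpow m]; ring


lemma split8 (t e : ℕ) (he : e < t) (f : ℕ → ℤ) :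
    ∑ k ∈ Finset.range t, sig8 e k * f k
      = (∑ k ∈ Finset.range e, f k) + (∑ k ∈ Finset.range (e+1), f k)
        - ∑ k ∈ Finset.range t, f k := by
  have h1 : ∑ k ∈ Finset.range t, sig8 e k * f k =
      ∑ k ∈ Finset.range (e+1), sig8 e k * f k +
      ∑ k ∈ Finset.Ico (e+1) t, sig8 e k * f k := by
    rw [Finset.range_eq_Ico,
      ← Finset.sum_Ico_consecutive _ (Nat.zero_le (e+1)) (by omega : e+1 ≤ t)]
    rw [Finset.range_eq_Ico]
  have h2 : ∑ k ∈ Finset.range (e+1), sig8 e k * f k = ∑ k ∈ Finset.range e, f k := by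
    rw [Finset.sum_range_succ]
    have hs : sig8 e e = 0 := by simp [sig8]
    rw [hs, zero_mul, add_zero]
    refine Finset.sum_congr rfl fun k hk => ?_
    have := Finset.mem_range.mp hk
    simp [sig8, this]
  have h3 : ∑ k ∈ Finset.Ico (e+1) t, sig8 e k * f k =
      -(∑ k ∈ Finset.range t, f k - ∑ k ∈ Finset.range (e+1), f k) := by
    rw [← Finset.sum_Ico_eq_sub _ (by omega : e + 1 ≤ t)]
    rw [← Finset.sum_neg_distrib]
    refine Finset.sum_congr rfl fun k hk => ?_
    have hk1 := (Finset.mem_Ico.mp hk).1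
    have hk2 : ¬ k < e := by omega
    have hk3 : ¬ k = e := by omega
    simp [sig8, hk2, hk3]
  rw [h1, h2, h3]; ring

lemma pm_sum {α : Type*} [DecidableEq α] (s : Finset α) (f : α → ℤ)
    (h : ∀ a ∈ s, f a = 1 ∨ f a = -1) :
    |∑ a ∈ s, f a| ≤ (s.card : ℤ) ∧ Even (∑ a ∈ s, f a + s.card) := by
  classical
  induction s using Finset.cons_induction with
  | empty => simp
  | cons a s ha ih =>
    obtain ⟨ih1, ih2⟩ := ih fun b hb => h b (Finset.mem_cons_of_mem hb)
    have hfa : |f a| = 1 := by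
      rcases h a (Finset.mem_cons_self a s) with h' | h' <;> simp [h']
    rw [Finset.sum_cons, Finset.card_cons]
    constructor
    · calc |f a + ∑ b ∈ s, f b| ≤ |f a| + |∑ b ∈ s, f b| := abs_add_le _ _
        _ ≤ ((s.card + 1 : ℕ) : ℤ) := by rw [hfa]; push_cast; linarith
    · have hre : f a + ∑ b ∈ s, f b + ((s.card + 1 : ℕ) : ℤ)
          = (f a + 1) + (∑ b ∈ s, f b + s.card) := by push_cast; ring
      rw [hre]
      refine Even.add ?_ ih2
      rcases h a (Finset.mem_cons_self a s) with h' | h' <;> simp [h']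

lemma core8 (t e j : ℕ) (hev : Even t) (he : e < t) (hj : j < t) :
    ∑ k ∈ Finset.range t, sig8 e k * w8 k j = if j = e then 1 else 0 := by
  have hsplit := split8 t e he (fun k => w8 k j)
  rw [hsplit, P8, P8, P8]
  have hst : s8 t = 0 := by simp [s8, hev]
  rcases lt_trichotomy j e with h | h | h
  · rw [if_neg (by omega), if_neg (by omega), if_neg (by omega), if_neg (by omega), hst]
    simp only [s8_succ, pow_add, pow_one]
    ring
  · subst h
    rw [if_pos le_rfl, if_neg (by omega), if_neg (by omega), if_pos rfl, hst]
    simp only [s8_succ, pow_add, pow_one]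
    rcases Nat.even_or_odd j with hp | hp
    · simp [s8, hp, hp.neg_one_pow]
    · simp [s8, Nat.not_even_iff_odd.mpr hp, hp.neg_one_pow]
  · rw [if_pos (le_of_lt h), if_pos (Nat.succ_le_of_lt h), if_neg (by omega), if_neg (by omega), hst]
    simp only [s8_succ, pow_add, pow_one]
    rcases Nat.even_or_odd j with hp | hp
    · simp [s8, hp, hp.neg_one_pow]
      rcases em (Even e) with he' | he' <;> simp [he']
    · simp [s8, Nat.not_even_iff_odd.mpr hp, hp.neg_one_pow]



theorem stmt_8 (t : ℕ) (ht : 4 ≤ t) (hev : Even t)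
    (D : ℕ → Fin t → ℝ)
    (hpm : ∀ k < 2 * t, ∀ i, D k i = 1 ∨ D k i = -1)
    (hinj : ∀ k < 2 * t, ∀ l < 2 * t, D k = D l → k = l)
    (hadj : ∀ k < 2 * t,
      (Finset.univ.filter fun i => D k i ≠ D ((k + 1) % (2 * t)) i).card = 1)
    (hsym : ∀ k < t, ∀ i, D (k + t) i = -(D k i))
    (T : Fin t → ℝ) (hT : ∀ i, T i = 1 ∨ T i = -1) :
    -- a unique choice, for each antipodal pair {S^k, S^{k+t}} = {S^k, -S^k},
    -- of a sign ε_k (selecting the member ε_k·S^k of the pair) and of a positive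
    -- odd coefficient λ_k with 1 ≤ λ_k ≤ t-1, decomposing T:
    ∃! p : (Fin t → ℤ) × (Fin t → ℤ),
      (∀ k, p.1 k = 1 ∨ p.1 k = -1) ∧
      (∀ k, 1 ≤ p.2 k ∧ p.2 k ≤ (t : ℤ) - 1 ∧ Odd (p.2 k)) ∧
      (∀ i, T i =
        ∑ k : Fin t, ((p.2 k * p.1 k : ℤ) : ℝ) *
          ((D (k : ℕ) i + D ((k : ℕ) + 1) i) / 2)) := by
  classical
  have hadj' : ∀ k, k < t → (Finset.univ.filter fun i => D k i ≠ D (k + 1) i).card = 1 := by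
    intro k hk
    have := hadj k (by omega)
    rwa [Nat.mod_eq_of_lt (by omega)] at this
  have hD0 : ∀ i, D 0 i = 1 ∨ D 0 i = -1 := hpm 0 (by omega)
  have hDt : ∀ i, D t i = -(D 0 i) := by
    intro i; have := hsym 0 (by omega) i; simpa using this
  -- each coordinate flips at least once among edges 0..t-1
  have hflipex : ∀ i, ∃ k, k < t ∧ D k i ≠ D (k+1) i := by
    intro i
    by_contra hcon
    push_neg at hcon
    have hconst : ∀ k, k ≤ t → D k i = D 0 i := by
      intro k hk
      induction k with
      | zero => rfl
      | succ k ih => rw [← hcon k (by omega)]; exact ih (by omega)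
    have h1 := hconst t le_rfl
    rw [hDt i] at h1
    rcases hD0 i with h' | h' <;> rw [h'] at h1 <;> norm_num at h1
  -- counting: exactly one flip per coordinate
  have hge : ∀ i : Fin t, 1 ≤ ((Finset.range t).filter fun k => D k i ≠ D (k+1) i).card := by
    intro i
    obtain ⟨k, hk1, hk2⟩ := hflipex i
    exact Finset.card_pos.mpr ⟨k, Finset.mem_filter.mpr ⟨Finset.mem_range.mpr hk1, hk2⟩⟩
  have hsum : ∑ i : Fin t, ((Finset.range t).filter fun k => D k i ≠ D (k+1) i).card = t := by
    calc ∑ i : Fin t, ((Finset.range t).filter fun k => D k i ≠ D (k+1) i).card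
        = ∑ i : Fin t, ∑ k ∈ Finset.range t, if D k i ≠ D (k+1) i then 1 else 0 := by
          simp [Finset.card_filter]
      _ = ∑ k ∈ Finset.range t, ∑ i : Fin t, if D k i ≠ D (k+1) i then 1 else 0 :=
          Finset.sum_comm
      _ = ∑ k ∈ Finset.range t, (Finset.univ.filter fun i => D k i ≠ D (k+1) i).card := by
          simp [Finset.card_filter]
      _ = ∑ k ∈ Finset.range t, 1 :=
          Finset.sum_congr rfl fun k hk => hadj' k (Finset.mem_range.mp hk)
      _ = t := by simp
  have hcount : ∀ i : Fin t, ((Finset.range t).filter fun k => D k i ≠ D (k+1) i).card = 1 := by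
    intro i
    by_contra hne
    have h2 : 1 < ((Finset.range t).filter fun k => D k i ≠ D (k+1) i).card :=
      lt_of_le_of_ne (hge i) (Ne.symm hne)
    have hlt : ∑ _i : Fin t, 1 < ∑ i : Fin t, ((Finset.range t).filter fun k => D k i ≠ D (k+1) i).card :=
      Finset.sum_lt_sum (fun j _ => hge j) ⟨i, Finset.mem_univ i, h2⟩
    simp [hsum] at hlt
  have hEex : ∀ i : Fin t, ∃ a, ((Finset.range t).filter fun k => D k i ≠ D (k+1) i) = {a} :=
    fun i => Finset.card_eq_one.mp (hcount i)
  choose E hE using hEex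
  have hEmem : ∀ i, E i ∈ (Finset.range t).filter fun k => D k i ≠ D (k+1) i := by
    intro i; rw [hE i]; exact Finset.mem_singleton_self _
  have hElt : ∀ i, E i < t := fun i => Finset.mem_range.mp (Finset.mem_filter.mp (hEmem i)).1
  have hEflip : ∀ i, D (E i) i ≠ D (E i + 1) i := fun i => (Finset.mem_filter.mp (hEmem i)).2
  have hEuniq : ∀ i k, k < t → D k i ≠ D (k+1) i → k = E i := by
    intro i k hk hflip
    have : k ∈ (Finset.range t).filter fun k => D k i ≠ D (k+1) i :=
      Finset.mem_filter.mpr ⟨Finset.mem_range.mpr hk, hflip⟩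
    rw [hE i] at this
    exact Finset.mem_singleton.mp this
  have hEinj : ∀ i i' : Fin t, E i = E i' → i = i' := by
    intro i i' he
    obtain ⟨a, ha⟩ := Finset.card_eq_one.mp (hadj' (E i) (hElt i))
    have hi : i ∈ Finset.univ.filter fun j => D (E i) j ≠ D (E i + 1) j :=
      Finset.mem_filter.mpr ⟨Finset.mem_univ _, hEflip i⟩
    have hi' : i' ∈ Finset.univ.filter fun j => D (E i) j ≠ D (E i + 1) j := by
      refine Finset.mem_filter.mpr ⟨Finset.mem_univ _, ?_⟩
      rw [he]; exact hEflip i'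
    rw [ha] at hi hi'
    rw [Finset.mem_singleton.mp hi, Finset.mem_singleton.mp hi']
  have hEsurj : ∀ e, e < t → ∃ i, E i = e := by
    intro e he
    have hbij : Function.Bijective (fun i : Fin t => (⟨E i, hElt i⟩ : Fin t)) := by
      rw [Fintype.bijective_iff_injective_and_card]
      exact ⟨fun i i' h => hEinj i i' (congrArg Fin.val h), rfl⟩
    obtain ⟨i, hi⟩ := hbij.2 ⟨e, he⟩
    exact ⟨i, congrArg Fin.val hi⟩
  -- values of D along the half-cycle
  have hDval : ∀ (i : Fin t) (k : ℕ), k ≤ t → D k i = if k ≤ E i then D 0 i else -(D 0 i) := by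
    intro i k hk
    induction k with
    | zero => simp
    | succ k ih =>
      have ihv := ih (by omega)
      rcases eq_or_ne k (E i) with hke | hke
      · have hpm1 := hpm k (by omega) i
        have hpm2 := hpm (k+1) (by omega) i
        have hf : D k i ≠ D (k+1) i := by rw [hke]; exact hEflip i
        have hneg : D (k+1) i = -(D k i) := by
          rcases hpm1 with h1 | h1 <;> rcases hpm2 with h2 | h2
          · exact absurd (h1.trans h2.symm) hf
          · rw [h1, h2]
          · rw [h1, h2]; norm_num
          · exact absurd (h1.trans h2.symm) hf
        rw [hneg, ihv]
        rw [if_pos (le_of_eq hke)]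
        rw [if_neg (show ¬ k + 1 ≤ E i by omega)]
      · have hnoflip : D k i = D (k+1) i := by
          by_contra hf
          exact hke (hEuniq i k (by omega) hf)
        rw [← hnoflip, ihv]
        rcases Nat.lt_or_ge k (E i) with hlt | hgt
        · rw [if_pos (le_of_lt hlt), if_pos (Nat.succ_le_of_lt hlt)]
        · have hgt' : E i < k := lt_of_le_of_ne hgt (Ne.symm hke)
          rw [if_neg (by omega), if_neg (by omega)]
  -- subtope values
  have hS : ∀ (i : Fin t) (k : ℕ), k < t →
      (D k i + D (k+1) i) / 2 = ((sig8 (E i) k : ℤ) : ℝ) * D 0 i := by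
    intro i k hk
    rw [hDval i k (by omega), hDval i (k+1) (by omega)]
    rcases lt_trichotomy k (E i) with h | h | h
    · rw [if_pos (le_of_lt h), if_pos (Nat.succ_le_of_lt h)]
      simp only [sig8, if_pos h]
      push_cast; ring
    · rw [if_pos (le_of_eq h), if_neg (by omega)]
      simp only [sig8, if_neg (by omega : ¬ k < E i), if_pos h]
      push_cast; ring
    · rw [if_neg (by omega), if_neg (by omega)]
      simp only [sig8, if_neg (by omega : ¬ k < E i), if_neg (by omega : ¬ k = E i)]
      push_cast; ring
  -- epsilon
  set ε : Fin t → ℤ := fun i => (if T i = 1 then 1 else -1) * (if D 0 i = 1 then 1 else -1)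
    with hεdef
  have hε1 : ∀ i, ε i = 1 ∨ ε i = -1 := by
    intro i
    simp only [hεdef]
    rcases hT i with h | h <;> rcases hD0 i with h' | h' <;> rw [h, h'] <;> norm_num
  have hεval : ∀ i, (ε i : ℝ) = T i * D 0 i := by
    intro i
    simp only [hεdef]
    rcases hT i with h | h <;> rcases hD0 i with h' | h' <;> rw [h, h'] <;> norm_num
  -- coefficients
  set c : Fin t → ℤ := fun k => ∑ i' : Fin t, w8 (↑k) (E i') * ε i' with hcdef
  -- core identity
  have hcore : ∀ i : Fin t, ∑ k : Fin t, sig8 (E i) ↑k * c k = ε i := by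
    intro i
    have hswap : ∑ k : Fin t, sig8 (E i) ↑k * c k
        = ∑ i' : Fin t, (∑ k : Fin t, sig8 (E i) ↑k * w8 ↑k (E i')) * ε i' := by
      rw [hcdef]
      simp only [Finset.mul_sum, Finset.sum_mul]
      rw [Finset.sum_comm]
      exact Finset.sum_congr rfl fun i' _ => Finset.sum_congr rfl fun k _ => by ring
    rw [hswap]
    have hinner : ∀ i' : Fin t,
        (∑ k : Fin t, sig8 (E i) ↑k * w8 ↑k (E i')) = if E i' = E i then 1 else 0 := by
      intro i'
      rw [Fin.sum_univ_eq_sum_range (fun k => sig8 (E i) k * w8 k (E i'))]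
      exact core8 t (E i) (E i') hev (hElt i) (hElt i')
    simp only [hinner]
    have heq : ∀ i' : Fin t, (E i' = E i) = (i' = i) :=
      fun i' => propext ⟨hEinj i' i, fun h => by rw [h]⟩
    simp only [heq, ite_mul, one_mul, zero_mul]
    rw [Finset.sum_ite_eq' Finset.univ i ε]
    simp
  -- the real-sum computation
  have hrealsum : ∀ (m : Fin t → ℤ) (i : Fin t),
      ∑ k : Fin t, ((m k : ℤ) : ℝ) * ((D (↑k) i + D (↑k + 1) i) / 2)
        = ((∑ k : Fin t, sig8 (E i) ↑k * m k : ℤ) : ℝ) * D 0 i := by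
    intro m i
    push_cast
    rw [Finset.sum_mul]
    refine Finset.sum_congr rfl fun k _ => ?_
    rw [hS i ↑k k.isLt]
    push_cast; ring
  -- properties of c
  have hckey : ∀ k : Fin t, Odd (c k) ∧ |c k| ≤ (t : ℤ) - 1 := by
    intro k
    obtain ⟨i0, hi0⟩ := hEsurj ↑k k.isLt
    have hzero : w8 (↑k) (E i0) * ε i0 = 0 := by
      rw [hi0]; simp [w8]
    have hc : c k = ∑ i' ∈ Finset.univ.erase i0, w8 (↑k) (E i') * ε i' := by
      show ∑ i' : Fin t, w8 (↑k) (E i') * ε i'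
        = ∑ i' ∈ Finset.univ.erase i0, w8 (↑k) (E i') * ε i'
      rw [← Finset.sum_erase_add Finset.univ _ (Finset.mem_univ i0), hzero, add_zero]
    have hpm' : ∀ i' ∈ Finset.univ.erase i0,
        w8 (↑k) (E i') * ε i' = 1 ∨ w8 (↑k) (E i') * ε i' = -1 := by
      intro i' hi'
      have hne : i' ≠ i0 := (Finset.mem_erase.mp hi').1
      have hEne : E i' ≠ (↑k : ℕ) := fun h => hne (hEinj i' i0 (h.trans hi0.symm))
      have hw : w8 (↑k) (E i') = 1 ∨ w8 (↑k) (E i') = -1 := by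
        unfold w8
        rw [if_neg hEne]
        split
        · exact neg_one_pow_eq_or ℤ _
        · exact neg_one_pow_eq_or ℤ _
      rcases hw with h1 | h1 <;> rcases hε1 i' with h2 | h2 <;> rw [h1, h2] <;> norm_num
    obtain ⟨habs, heven⟩ := pm_sum _ _ hpm'
    rw [← hc] at habs heven
    have hcard : ((Finset.univ : Finset (Fin t)).erase i0).card = t - 1 := by
      rw [Finset.card_erase_of_mem (Finset.mem_univ _)]; simp
    rw [hcard] at habs heven
    have hcast : ((t - 1 : ℕ) : ℤ) = (t : ℤ) - 1 := by
      have : 1 ≤ t := by omega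
      push_cast [this]; ring
    rw [hcast] at habs heven
    constructor
    · have hodd : Odd ((t : ℤ) - 1) := by
        refine Even.sub_odd ?_ odd_one
        exact_mod_cast hev
      rw [Int.even_add] at heven
      rw [← Int.not_even_iff_odd]
      intro hc'
      exact (Int.not_even_iff_odd.mpr hodd) (heven.mp hc')
    · exact habs
  -- sign/abs helper
  have hcne : ∀ k : Fin t, c k ≠ 0 := by
    intro k h0
    have := (hckey k).1
    rw [h0] at this
    simp at this
  have habs_mul : ∀ k : Fin t, |c k| * (if 0 < c k then 1 else -1) = c k := by
    intro k
    rcases lt_trichotomy 0 (c k) with h | h | h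
    · rw [if_pos h, abs_of_pos h, mul_one]
    · exact absurd h.symm (hcne k)
    · rw [if_neg (by omega), abs_of_neg h]; ring
  refine ⟨⟨fun k => if 0 < c k then 1 else -1, fun k => |c k|⟩, ⟨?_, ?_, ?_⟩, ?_⟩
  · intro k
    show (if 0 < c k then (1:ℤ) else -1) = 1 ∨ (if 0 < c k then (1:ℤ) else -1) = -1
    split
    · exact Or.inl rfl
    · exact Or.inr rfl
  · intro k
    show 1 ≤ |c k| ∧ |c k| ≤ (t : ℤ) - 1 ∧ Odd |c k|
    obtain ⟨hodd, habs⟩ := hckey k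
    have h1 : 0 < |c k| := abs_pos.mpr (hcne k)
    refine ⟨by omega, habs, ?_⟩
    rcases abs_choice (c k) with h | h <;> rw [h]
    · exact hodd
    · exact hodd.neg
  · intro i
    show T i = ∑ k : Fin t, ((|c k| * (if 0 < c k then (1:ℤ) else -1) : ℤ) : ℝ) *
      ((D (↑k) i + D (↑k + 1) i) / 2)
    have hmk : ∀ k : Fin t, (|c k| * (if 0 < c k then 1 else -1) : ℤ) = c k := habs_mul
    have hsq : D 0 i * D 0 i = 1 := by rcases hD0 i with h | h <;> rw [h] <;> norm_num
    calc T i = ((ε i : ℤ) : ℝ) * D 0 i := by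
          rw [hεval i, mul_assoc, hsq, mul_one]
      _ = ((∑ k : Fin t, sig8 (E i) ↑k * c k : ℤ) : ℝ) * D 0 i := by rw [hcore i]
      _ = ∑ k : Fin t, ((c k : ℤ) : ℝ) * ((D (↑k) i + D (↑k + 1) i) / 2) := (hrealsum c i).symm
      _ = ∑ k : Fin t, ((|c k| * (if 0 < c k then 1 else -1) : ℤ) : ℝ) *
            ((D (↑k) i + D (↑k + 1) i) / 2) := by
          refine Finset.sum_congr rfl fun k _ => ?_
          rw [hmk k]
  · rintro ⟨f, g⟩ ⟨hq1, hq2, hq3⟩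
    simp only at hq1 hq2 hq3 ⊢
    -- difference coefficients
    set d : Fin t → ℤ := fun k => g k * f k - c k with hddef
    have hzero : ∀ i : Fin t, ∑ k : Fin t, sig8 (E i) ↑k * d k = 0 := by
      intro i
      have h1 := hq3 i
      have hsq : D 0 i * D 0 i = 1 := by rcases hD0 i with h | h <;> rw [h] <;> norm_num
      have h2 : T i = ∑ k : Fin t, ((c k : ℤ) : ℝ) * ((D (↑k) i + D (↑k + 1) i) / 2) := by
        rw [hrealsum c i, hcore i, hεval i, mul_assoc, hsq, mul_one]
      have h3 : ∑ k : Fin t, ((d k : ℤ) : ℝ) * ((D (↑k) i + D (↑k + 1) i) / 2) = 0 := by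
        have hterm : ∀ k : Fin t, ((d k : ℤ) : ℝ) * ((D (↑k) i + D (↑k + 1) i) / 2)
            = ((g k * f k : ℤ) : ℝ) * ((D (↑k) i + D (↑k + 1) i) / 2)
              - ((c k : ℤ) : ℝ) * ((D (↑k) i + D (↑k + 1) i) / 2) := by
          intro k
          have hcast : ((d k : ℤ) : ℝ) = ((g k * f k : ℤ) : ℝ) - ((c k : ℤ) : ℝ) := by
            rw [hddef]; push_cast; ring
          rw [hcast, sub_mul]
        rw [Finset.sum_congr rfl (fun k _ => hterm k), Finset.sum_sub_distrib, ← h1, ← h2,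
          sub_self]
      rw [hrealsum d i] at h3
      have hD0ne : D 0 i ≠ 0 := by rcases hD0 i with h | h <;> rw [h] <;> norm_num
      have h4 : ((∑ k : Fin t, sig8 (E i) ↑k * d k : ℤ) : ℝ) = 0 := by
        rcases mul_eq_zero.mp h3 with h | h
        · exact h
        · exact absurd h hD0ne
      exact_mod_cast h4
    -- d vanishes
    set dd : ℕ → ℤ := fun k => if h : k < t then d ⟨k, h⟩ else 0 with hdddef
    have hre : ∀ e, e < t → ∑ k ∈ Finset.range t, sig8 e k * dd k = 0 := by
      intro e he
      obtain ⟨i, hi⟩ := hEsurj e he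
      rw [← hi]
      rw [← Fin.sum_univ_eq_sum_range (fun k => sig8 (E i) k * dd k)]
      rw [← hzero i]
      refine Finset.sum_congr rfl fun k _ => ?_
      congr 1
      rw [hdddef]
      simp only [Fin.is_lt, dif_pos]
    set A : ℕ → ℤ := fun m => ∑ k ∈ Finset.range m, dd k with hAdef
    have hrel : ∀ e, e < t → A e + A (e+1) = A t := by
      intro e he
      have := hre e he
      rw [split8 t e he dd] at this
      rw [hAdef]
      simp only
      linarith
    have hA : ∀ m, m ≤ t → A m = if Even m then 0 else A t := by
      intro m hm
      induction m with
      | zero => simp [hAdef]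
      | succ m ih =>
        have h1 := ih (by omega)
        have h2 := hrel m (by omega)
        have h3 : A (m+1) = A t - A m := by linarith
        rcases Nat.even_or_odd m with hp | hp
        · rw [h3, h1, if_pos hp, if_neg (by simp [Nat.even_add_one, hp])]
          ring
        · rw [h3, h1, if_neg (by rw [← Nat.not_odd_iff_even]; simp [hp]),
            if_pos (by simp [Nat.even_add_one, hp])]
          ring
    have hAt : A t = 0 := by
      have := hA t le_rfl
      rwa [if_pos hev] at this
    have hA0 : ∀ m, m ≤ t → A m = 0 := by
      intro m hm
      rw [hA m hm]
      split
      · rfl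
      · exact hAt
    have hd0 : ∀ k : Fin t, d k = 0 := by
      intro k
      have h1 := hA0 ↑k (le_of_lt k.isLt)
      have h2 := hA0 (↑k + 1) (by omega)
      have h3 : A (↑k + 1) = A ↑k + dd ↑k := by
        rw [hAdef]; exact Finset.sum_range_succ _ _
      have h4 : dd ↑k = d k := by
        rw [hdddef]; simp only [Fin.is_lt, dif_pos]
      rw [h1, h2, h4] at h3
      linarith
    have hck : ∀ k : Fin t, g k * f k = c k := by
      intro k
      have := hd0 k
      rw [hddef] at this
      simp only at this
      linarith
    -- conclude equality of pairs
    have hf : f = fun k => if 0 < c k then 1 else -1 := by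
      funext k
      obtain ⟨hg1, _, _⟩ := hq2 k
      rcases hq1 k with h | h
      · have : c k = g k := by rw [← hck k, h, mul_one]
        rw [h, if_pos (by omega)]
      · have : c k = -(g k) := by rw [← hck k, h]; ring
        rw [h, if_neg (by omega)]
    have hg : g = fun k => |c k| := by
      funext k
      obtain ⟨hg1, _, _⟩ := hq2 k
      rcases hq1 k with h | h
      · have h5 : c k = g k := by rw [← hck k, h, mul_one]
        rw [← h5] at hg1 ⊢
        exact (abs_of_pos (by omega)).symm
      · have h5 : c k = -(g k) := by rw [← hck k, h]; ring
        have : g k = -(c k) := by omega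
        rw [this]
        exact (abs_of_neg (by omega)).symm
    rw [hf, hg]
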